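/- Let s(η, ζ) = (2/π^2) * ∫_{0}^{2π} sqrt(1 - (sqrt(1-η^2) * sqrt(1-ζ^2) * sin γ - η ζ)^2) dγ. Then for every ζ ∈ [-1, 1], ∫_{-1}^{1} s(η, ζ) dη = 2; that is, the total insolation over the planet is normalized to 2 independently of the obliquity. -/

import Mathlib

open MeasureTheory Real Set intervalIntegral

noncomputable def fI (t : ℝ) : ℝ := Real.sqrt (1 - t ^ 2)

lemma fI_cont : Continuous fI := Real.continuous_sqrt.comp (by continuity)

lemma fI_nonneg (t : ℝ) : 0 ≤ fI t := Real.sqrt_nonneg _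

lemma fI_le_one (t : ℝ) : fI t ≤ 1 := by
  have h : (1:ℝ) - t^2 ≤ 1 := by nlinarith [sq_nonneg t]
  calc Real.sqrt (1 - t^2) ≤ Real.sqrt 1 := Real.sqrt_le_sqrt h
  _ = 1 := Real.sqrt_one

lemma fI_abs_le_one (t : ℝ) : |fI t| ≤ 1 := by
  rw [abs_of_nonneg (fI_nonneg t)]; exact fI_le_one t

lemma fI_meas : Measurable fI := fI_cont.measurable

lemma gauss1 : Integrable (fun x : ℝ => Real.exp (-x^2)) := by
  simpa using integrable_exp_neg_mul_sq (one_pos)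

lemma gaussAbs : Integrable (fun x : ℝ => |x| * Real.exp (-x^2)) := by
  have h := (integrable_mul_exp_neg_mul_sq (one_pos)).abs
  refine h.congr ?_
  filter_upwards with x
  rw [abs_mul, abs_of_nonneg (Real.exp_nonneg _), neg_one_mul]

lemma finOo : IsFiniteMeasure (volume.restrict (Ioo (-π) π)) :=
  ⟨by rw [Measure.restrict_apply_univ]; exact measure_Ioo_lt_top⟩

lemma integrableOn_rect {F : ℝ × ℝ → ℝ} (hm : Measurable F) (C : ℝ)
    (hb : ∀ p : ℝ × ℝ, |F p| ≤ C * (|p.1| * Real.exp (-p.1^2))) :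
    IntegrableOn F (Ioi (0:ℝ) ×ˢ Ioo (-π) π) := by
  haveI := finOo
  have hdom : Integrable (fun p : ℝ × ℝ => (C * (|p.1| * Real.exp (-p.1^2))) * 1)
      ((volume.restrict (Ioi (0:ℝ))).prod (volume.restrict (Ioo (-π) π))) :=
    Integrable.mul_prod ((gaussAbs.const_mul C).restrict) (integrable_const 1)
  rw [IntegrableOn, Measure.volume_eq_prod, ← Measure.prod_restrict]
  refine hdom.mono' (hm.aestronglyMeasurable) ?_
  filter_upwards with p
  rw [mul_one]
  exact (Real.norm_eq_abs _ ▸ hb p)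

lemma shift_periodic {W : ℝ → ℝ} (hW : Function.Periodic W (2*π)) (δ : ℝ) :
    ∫ θ in Ioo (-π) π, W (θ - δ) = ∫ θ in Ioo (-π) π, W θ := by
  have hle : -π ≤ π := by linarith [pi_pos]
  rw [← integral_Ioc_eq_integral_Ioo, ← intervalIntegral.integral_of_le hle,
    ← integral_Ioc_eq_integral_Ioo (f := W), ← intervalIntegral.integral_of_le hle]
  rw [intervalIntegral.integral_comp_sub_right W δ]
  have h1 := hW.intervalIntegral_add_eq (-π - δ) (-π)
  have e1 : -π - δ + 2*π = π - δ := by ring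
  have e2 : -π + 2*π = π := by ring
  rw [e1, e2] at h1
  exact h1

lemma rot2D_aux (a c d : ℝ) (hcd : c^2 + d^2 = 1) (hc : 0 ≤ c) :
    (∫ p : ℝ × ℝ, fI ((c*p.1 + d*p.2) / Real.sqrt (a + p.1^2 + p.2^2))
        * Real.exp (-(a + p.1^2 + p.2^2)))
      = ∫ r in Ioi (0:ℝ), ∫ θ in Ioo (-π) π,
          r * (fI (r * Real.cos θ / Real.sqrt (a + r^2)) * Real.exp (-(a + r^2))) := by
  have hd1 : d^2 ≤ 1 := by nlinarith [sq_nonneg c]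
  have hdm : -1 ≤ d := by nlinarith
  have hdM : d ≤ 1 := by nlinarith
  set δ := Real.arcsin d with hδ
  have hcosδ : Real.cos δ = c := by
    rw [hδ, Real.cos_arcsin]
    have : 1 - d^2 = c^2 := by linarith
    rw [this, Real.sqrt_sq hc]
  have hsinδ : Real.sin δ = d := Real.sin_arcsin hdm hdM
  rw [← integral_comp_polarCoord_symm]
  have htgt : polarCoord.target = Ioi (0:ℝ) ×ˢ Ioo (-π) π := rfl
  rw [htgt]
  have key : ∀ q ∈ Ioi (0:ℝ) ×ˢ Ioo (-π) π,
      q.1 • (fI ((c*(polarCoord.symm q).1 + d*(polarCoord.symm q).2) /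
          Real.sqrt (a + (polarCoord.symm q).1^2 + (polarCoord.symm q).2^2))
        * Real.exp (-(a + (polarCoord.symm q).1^2 + (polarCoord.symm q).2^2)))
      = q.1 * (fI (q.1 * Real.cos (q.2 - δ) / Real.sqrt (a + q.1^2))
          * Real.exp (-(a + q.1^2))) := by
    rintro ⟨r, θ⟩ ⟨hr, hθ⟩
    have hsymm : polarCoord.symm (r, θ) = (r * Real.cos θ, r * Real.sin θ) := rfl
    rw [hsymm]
    have hsq : a + (r * Real.cos θ)^2 + (r * Real.sin θ)^2 = a + r^2 := by
      have := Real.sin_sq_add_cos_sq θ; nlinarith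
    have hnum : c*(r * Real.cos θ) + d*(r * Real.sin θ) = r * Real.cos (θ - δ) := by
      rw [Real.cos_sub, hcosδ, hsinδ]; ring
    rw [hsq, hnum, smul_eq_mul]
  rw [setIntegral_congr_fun (by exact (measurableSet_Ioi.prod measurableSet_Ioo)) key]
  have hmeas : Measurable (fun q : ℝ × ℝ => q.1 * (fI (q.1 * Real.cos (q.2 - δ) /
      Real.sqrt (a + q.1^2)) * Real.exp (-(a + q.1^2)))) := by
    apply Measurable.mul measurable_fst
    apply Measurable.mul
    · exact fI_meas.comp ((measurable_fst.mul
        ((Real.continuous_cos.measurable).comp (measurable_snd.sub measurable_const))).div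
        (Real.continuous_sqrt.measurable.comp ((measurable_const.add (measurable_fst.pow_const 2)))))
    · exact (Real.continuous_exp.measurable).comp
        ((measurable_const.add (measurable_fst.pow_const 2)).neg)
  have hbound : ∀ q : ℝ × ℝ, |q.1 * (fI (q.1 * Real.cos (q.2 - δ) /
      Real.sqrt (a + q.1^2)) * Real.exp (-(a + q.1^2)))|
      ≤ Real.exp (-a) * (|q.1| * Real.exp (-q.1^2)) := by
    intro q
    rw [abs_mul, abs_mul]
    have h1 : |Real.exp (-(a + q.1^2))| = Real.exp (-a) * Real.exp (-q.1^2) := by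
      rw [abs_of_nonneg (Real.exp_nonneg _), ← Real.exp_add]; ring_nf
    calc |q.1| * (|fI _| * |Real.exp (-(a + q.1^2))|)
        ≤ |q.1| * (1 * |Real.exp (-(a + q.1^2))|) := by
          apply mul_le_mul_of_nonneg_left
          · exact mul_le_mul_of_nonneg_right (fI_abs_le_one _) (abs_nonneg _)
          · exact abs_nonneg _
      _ = Real.exp (-a) * (|q.1| * Real.exp (-q.1^2)) := by rw [one_mul, h1]; ring
  rw [Measure.volume_eq_prod, setIntegral_prod _ (integrableOn_rect hmeas (Real.exp (-a)) hbound)]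
  apply setIntegral_congr_fun measurableSet_Ioi
  intro r _
  exact shift_periodic (W := fun θ => r * (fI (r * Real.cos θ / Real.sqrt (a + r^2))
    * Real.exp (-(a + r^2)))) (by intro x; simp [Real.cos_add_two_pi]) δ

noncomputable def Phi (ζ : ℝ) (x : ℝ × ℝ × ℝ) : ℝ :=
  fI ((Real.sqrt (1 - ζ^2) * x.2.1 - ζ * x.2.2) / Real.sqrt (x.1^2 + x.2.1^2 + x.2.2^2))
    * Real.exp (-(x.1^2 + x.2.1^2 + x.2.2^2))

lemma Phi_meas (ζ : ℝ) : Measurable (Phi ζ) := by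
  have hq : Measurable (fun x : ℝ × ℝ × ℝ => x.1^2 + x.2.1^2 + x.2.2^2) := by
    exact ((measurable_fst.pow_const 2).add
      ((measurable_fst.comp measurable_snd).pow_const 2)).add
      ((measurable_snd.comp measurable_snd).pow_const 2)
  exact ((fI_meas.comp (((measurable_const.mul (measurable_fst.comp measurable_snd)).sub
    (measurable_const.mul (measurable_snd.comp measurable_snd))).div
    (Real.continuous_sqrt.measurable.comp hq)))).mul
    (Real.continuous_exp.measurable.comp hq.neg)

lemma gauss3 : Integrable (fun x : ℝ × ℝ × ℝ =>
    Real.exp (-x.1^2) * (Real.exp (-x.2.1^2) * Real.exp (-x.2.2^2))) := by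
  have h2 : Integrable (fun p : ℝ × ℝ => Real.exp (-p.1^2) * Real.exp (-p.2^2)) := by
    rw [Measure.volume_eq_prod]
    exact Integrable.mul_prod gauss1 gauss1
  rw [Measure.volume_eq_prod]
  exact Integrable.mul_prod gauss1 h2

lemma integrable_of_gauss_bound {F : ℝ × ℝ × ℝ → ℝ} (hm : Measurable F)
    (hb : ∀ x, |F x| ≤ Real.exp (-(x.1^2 + x.2.1^2 + x.2.2^2))) : Integrable F := by
  refine gauss3.mono' hm.aestronglyMeasurable ?_
  filter_upwards with x
  rw [Real.norm_eq_abs]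
  refine (hb x).trans (le_of_eq ?_)
  rw [← Real.exp_add, ← Real.exp_add]
  ring_nf

lemma Phi_integrable (ζ : ℝ) : Integrable (Phi ζ) := by
  refine integrable_of_gauss_bound (Phi_meas ζ) ?_
  intro x
  rw [Phi, abs_mul, abs_of_nonneg (Real.exp_nonneg _)]
  calc |fI _| * Real.exp (-(x.1^2 + x.2.1^2 + x.2.2^2))
      ≤ 1 * Real.exp (-(x.1^2 + x.2.1^2 + x.2.2^2)) :=
        mul_le_mul_of_nonneg_right (fI_abs_le_one _) (Real.exp_nonneg _)
    _ = _ := one_mul _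

noncomputable def G (ζ : ℝ) : ℝ := ∫ x : ℝ × ℝ × ℝ, Phi ζ x

lemma G_eq_G_one {ζ : ℝ} (hζ : ζ ∈ Set.Icc (-1:ℝ) 1) : G ζ = G 1 := by
  have key : ∀ ζ' : ℝ, ζ' ∈ Set.Icc (-1:ℝ) 1 → G ζ' =
      ∫ x₁ : ℝ, ∫ r in Ioi (0:ℝ), ∫ θ in Ioo (-π) π,
        r * (fI (r * Real.cos θ / Real.sqrt (x₁^2 + r^2)) * Real.exp (-(x₁^2 + r^2))) := by
    intro ζ' hζ'
    have h1 : (1:ℝ) - ζ'^2 ≥ 0 := by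
      rcases hζ' with ⟨h1, h2⟩; nlinarith
    rw [G, Measure.volume_eq_prod, integral_prod _ (by
      rw [← Measure.volume_eq_prod]; exact Phi_integrable ζ')]
    apply MeasureTheory.integral_congr_ae
    filter_upwards with x₁
    have := rot2D_aux (x₁^2) (Real.sqrt (1 - ζ'^2)) (-ζ')
      (by rw [Real.sq_sqrt h1]; ring) (Real.sqrt_nonneg _)
    rw [← this]
    apply MeasureTheory.integral_congr_ae
    filter_upwards with p
    show Phi ζ' (x₁, p) = _
    rw [Phi]
    ring_nf
  rw [key ζ hζ, key 1 (by norm_num)]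

noncomputable def kfun (ζ : ℝ) (z : ℝ) (q : ℝ × ℝ) : ℝ :=
  q.1 * (fI ((Real.sqrt (1-ζ^2) * q.1 * Real.sin q.2 - ζ*z) / Real.sqrt (q.1^2 + z^2))
    * Real.exp (-(q.1^2 + z^2)))

lemma G_eq_k (ζ : ℝ) :
    G ζ = ∫ z : ℝ, ∫ q in Ioi (0:ℝ) ×ˢ Ioo (-π) π, kfun ζ z q := by
  set T := (MeasurableEquiv.prodComm : ℝ × (ℝ × ℝ) ≃ᵐ (ℝ × ℝ) × ℝ).trans MeasurableEquiv.prodAssoc with hTdef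
  have hswap : MeasurePreserving (Prod.swap : ℝ × (ℝ × ℝ) → (ℝ × ℝ) × ℝ) volume volume := by
    rw [Measure.volume_eq_prod, Measure.volume_eq_prod]
    exact Measure.measurePreserving_swap
  have hT : MeasurePreserving T volume volume :=
    MeasureTheory.volume_preserving_prodAssoc.comp hswap
  have hTint : Integrable (fun w : ℝ × (ℝ × ℝ) => Phi ζ (T w)) volume :=
    (hT.integrable_comp_emb T.measurableEmbedding).mpr (Phi_integrable ζ)
  have h1 : G ζ = ∫ w : ℝ × (ℝ × ℝ), Phi ζ (T w) :=
    (hT.integral_comp T.measurableEmbedding (Phi ζ)).symm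
  rw [h1, Measure.volume_eq_prod, integral_prod _ (by rw [← Measure.volume_eq_prod]; exact hTint)]
  apply MeasureTheory.integral_congr_ae
  filter_upwards with z
  have h2 : (fun p : ℝ × ℝ => Phi ζ (T (z, p))) = fun p : ℝ × ℝ => Phi ζ (p.1, p.2, z) := rfl
  rw [h2, ← integral_comp_polarCoord_symm (fun p => Phi ζ (p.1, p.2, z))]
  have htgt : polarCoord.target = Ioi (0:ℝ) ×ˢ Ioo (-π) π := rfl
  rw [htgt]
  apply setIntegral_congr_fun (measurableSet_Ioi.prod measurableSet_Ioo)
  rintro ⟨r, θ⟩ ⟨hr, hθ⟩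
  have hsymm : polarCoord.symm (r, θ) = (r * Real.cos θ, r * Real.sin θ) := rfl
  dsimp only
  rw [hsymm]
  show r • Phi ζ (r * Real.cos θ, r * Real.sin θ, z) = kfun ζ z (r, θ)
  rw [Phi, kfun]
  have hsq : (r * Real.cos θ)^2 + (r * Real.sin θ)^2 + z^2 = r^2 + z^2 := by
    have := Real.sin_sq_add_cos_sq θ; nlinarith
  rw [hsq, smul_eq_mul]
  ring_nf

lemma kfun_meas (ζ : ℝ) : Measurable (fun y : ℝ × (ℝ × ℝ) => kfun ζ y.1 y.2) := by
  have hr : Measurable (fun y : ℝ × (ℝ × ℝ) => y.2.1) := measurable_fst.comp measurable_snd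
  have hθ : Measurable (fun y : ℝ × (ℝ × ℝ) => y.2.2) := measurable_snd.comp measurable_snd
  have hz : Measurable (fun y : ℝ × (ℝ × ℝ) => y.1) := measurable_fst
  have hq : Measurable (fun y : ℝ × (ℝ × ℝ) => y.2.1^2 + y.1^2) :=
    (hr.pow_const 2).add (hz.pow_const 2)
  exact hr.mul ((fI_meas.comp ((((measurable_const.mul hr).mul
    (Real.continuous_sin.measurable.comp hθ)).sub (measurable_const.mul hz)).div
    (Real.continuous_sqrt.measurable.comp hq))).mul
    (Real.continuous_exp.measurable.comp hq.neg))

lemma kfun_bound (ζ : ℝ) (y : ℝ × (ℝ × ℝ)) :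
    ‖kfun ζ y.1 y.2‖ ≤ Real.exp (-y.1^2) * (|y.2.1| * Real.exp (-y.2.1^2) * 1) := by
  rw [Real.norm_eq_abs, kfun, abs_mul, abs_mul]
  have h1 : |Real.exp (-(y.2.1^2 + y.1^2))| = Real.exp (-y.2.1^2) * Real.exp (-y.1^2) := by
    rw [abs_of_nonneg (Real.exp_nonneg _), ← Real.exp_add]; ring_nf
  calc |y.2.1| * (|fI _| * |Real.exp (-(y.2.1^2 + y.1^2))|)
      ≤ |y.2.1| * (1 * |Real.exp (-(y.2.1^2 + y.1^2))|) := by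
        apply mul_le_mul_of_nonneg_left
          (mul_le_mul_of_nonneg_right (fI_abs_le_one _) (abs_nonneg _)) (abs_nonneg _)
    _ = Real.exp (-y.1^2) * (|y.2.1| * Real.exp (-y.2.1^2) * 1) := by rw [one_mul, h1]; ring

lemma kfun_integrable (ζ : ℝ) : Integrable (fun y : ℝ × (ℝ × ℝ) => kfun ζ y.1 y.2)
    (volume.prod ((volume.restrict (Ioi (0:ℝ))).prod (volume.restrict (Ioo (-π) π)))) := by
  haveI := finOo
  have hdom : Integrable (fun y : ℝ × (ℝ × ℝ) =>
      Real.exp (-y.1^2) * (|y.2.1| * Real.exp (-y.2.1^2) * 1))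
      (volume.prod ((volume.restrict (Ioi (0:ℝ))).prod (volume.restrict (Ioo (-π) π)))) :=
    gauss1.mul_prod (Integrable.mul_prod (gaussAbs.restrict) (integrable_const 1))
  exact hdom.mono' ((kfun_meas ζ).aestronglyMeasurable) (Filter.Eventually.of_forall (kfun_bound ζ))

lemma G_eq_iterated (ζ : ℝ) :
    G ζ = ∫ θ in Ioo (-π) π, ∫ z : ℝ, ∫ r in Ioi (0:ℝ), kfun ζ z (r, θ) := by
  rw [G_eq_k]
  set μI := volume.restrict (Ioi (0:ℝ)) with hμI
  set μO := volume.restrict (Ioo (-π) π) with hμO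
  have hrestr : (volume : Measure (ℝ × ℝ)).restrict (Ioi (0:ℝ) ×ˢ Ioo (-π) π)
      = μI.prod μO := by
    rw [hμI, hμO, Measure.prod_restrict, ← Measure.volume_eq_prod]
  have step1 : ∀ z : ℝ, (∫ q in Ioi (0:ℝ) ×ˢ Ioo (-π) π, kfun ζ z q)
      = ∫ q, kfun ζ z q ∂(μI.prod μO) := fun z => by rw [← hrestr]
  simp_rw [step1]
  rw [← integral_prod _ (kfun_integrable ζ)]
  set T₂ := (MeasurableEquiv.prodAssoc.symm :
      ℝ × (ℝ × ℝ) ≃ᵐ (ℝ × ℝ) × ℝ).trans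
      (MeasurableEquiv.prodComm : (ℝ × ℝ) × ℝ ≃ᵐ ℝ × (ℝ × ℝ)) with hT₂def
  have hT₂ : MeasurePreserving T₂ (volume.prod (μI.prod μO)) (μO.prod (volume.prod μI)) :=
    Measure.measurePreserving_swap.comp
      ((measurePreserving_prodAssoc volume μI μO).symm MeasurableEquiv.prodAssoc)
  set g := fun w : ℝ × (ℝ × ℝ) => kfun ζ w.2.1 (w.2.2, w.1) with hgdef
  have hcomp : (fun y : ℝ × (ℝ × ℝ) => kfun ζ y.1 y.2) = fun x => g (T₂ x) := rfl
  have hgint : Integrable g (μO.prod (volume.prod μI)) := by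
    refine (hT₂.integrable_comp_emb T₂.measurableEmbedding).mp ?_
    exact kfun_integrable ζ
  rw [hcomp, hT₂.integral_comp T₂.measurableEmbedding g]
  rw [integral_prod _ hgint]
  apply MeasureTheory.integral_congr_ae
  filter_upwards [hgint.prod_right_ae] with θ hθ
  rw [integral_prod _ hθ]

lemma A4 (b c : ℝ) :
    (∫ z : ℝ, ∫ r in Ioi (0:ℝ),
        r * (fI ((b * r - c * z) / Real.sqrt (r^2 + z^2)) * Real.exp (-(r^2 + z^2))))
    = (∫ t in Ioi (0:ℝ), t^2 * Real.exp (-t^2))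
        * ∫ η in (-1:ℝ)..1, fI (b * Real.sqrt (1 - η^2) - c * η) := by
  set Ψ : ℝ × ℝ → ℝ := fun p => if 0 < p.1 then
    p.1 * (fI ((b * p.1 - c * p.2) / Real.sqrt (p.1^2 + p.2^2))
      * Real.exp (-(p.1^2 + p.2^2))) else 0 with hΨdef
  have hΨmeas : Measurable Ψ := by
    refine Measurable.ite (measurableSet_lt measurable_const measurable_fst) ?_ measurable_const
    have hq : Measurable (fun p : ℝ × ℝ => p.1^2 + p.2^2) :=
      (measurable_fst.pow_const 2).add (measurable_snd.pow_const 2)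
    exact measurable_fst.mul ((fI_meas.comp
      (((measurable_const.mul measurable_fst).sub (measurable_const.mul measurable_snd)).div
        (Real.continuous_sqrt.measurable.comp hq))).mul
      (Real.continuous_exp.measurable.comp hq.neg))
  have hΨbound : ∀ p : ℝ × ℝ, ‖Ψ p‖ ≤ (|p.1| * Real.exp (-p.1^2)) * Real.exp (-p.2^2) := by
    intro p
    rw [Real.norm_eq_abs, hΨdef]
    dsimp only
    split_ifs with h
    · rw [abs_mul, abs_mul]
      have h1 : |Real.exp (-(p.1^2 + p.2^2))| = Real.exp (-p.1^2) * Real.exp (-p.2^2) := by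
        rw [abs_of_nonneg (Real.exp_nonneg _), ← Real.exp_add]; ring_nf
      calc |p.1| * (|fI _| * |Real.exp (-(p.1^2 + p.2^2))|)
          ≤ |p.1| * (1 * |Real.exp (-(p.1^2 + p.2^2))|) := by
            apply mul_le_mul_of_nonneg_left
              (mul_le_mul_of_nonneg_right (fI_abs_le_one _) (abs_nonneg _)) (abs_nonneg _)
        _ = (|p.1| * Real.exp (-p.1^2)) * Real.exp (-p.2^2) := by rw [one_mul, h1]; ring
    · simp only [abs_zero]
      positivity
  have hΨint : Integrable Ψ := by
    have hdom : Integrable (fun p : ℝ × ℝ => (|p.1| * Real.exp (-p.1^2)) * Real.exp (-p.2^2)) := by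
      rw [Measure.volume_eq_prod]
      exact Integrable.mul_prod gaussAbs gauss1
    exact hdom.mono' hΨmeas.aestronglyMeasurable (Filter.Eventually.of_forall hΨbound)
  have step1 : (∫ z : ℝ, ∫ r in Ioi (0:ℝ),
      r * (fI ((b * r - c * z) / Real.sqrt (r^2 + z^2)) * Real.exp (-(r^2 + z^2))))
      = ∫ p : ℝ × ℝ, Ψ p := by
    rw [Measure.volume_eq_prod, integral_prod_symm _ (by rw [← Measure.volume_eq_prod]; exact hΨint)]
    apply MeasureTheory.integral_congr_ae
    filter_upwards with z
    rw [← MeasureTheory.integral_indicator measurableSet_Ioi]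
    apply MeasureTheory.integral_congr_ae
    filter_upwards with r
    rw [Set.indicator_apply, hΨdef]
    simp only [mem_Ioi]
  rw [step1, ← integral_comp_polarCoord_symm Ψ]
  have htgt : polarCoord.target = Ioi (0:ℝ) ×ˢ Ioo (-π) π := rfl
  rw [htgt]
  have key : ∀ q ∈ Ioi (0:ℝ) ×ˢ Ioo (-π) π,
      q.1 • Ψ (polarCoord.symm q) = (fun R => R^2 * Real.exp (-R^2)) q.1 *
        (fun φ => if 0 < Real.cos φ then
          Real.cos φ * fI (b * Real.cos φ - c * Real.sin φ) else 0) q.2 := by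
    rintro ⟨R, φ⟩ ⟨hR, hφ⟩
    simp only [mem_Ioi] at hR
    have hsymm : polarCoord.symm (R, φ) = (R * Real.cos φ, R * Real.sin φ) := rfl
    dsimp only
    rw [hsymm, hΨdef]
    have hsq : (R * Real.cos φ)^2 + (R * Real.sin φ)^2 = R^2 := by
      have := Real.sin_sq_add_cos_sq φ; nlinarith
    have hcond : (0 < R * Real.cos φ) ↔ (0 < Real.cos φ) := by
      constructor <;> intro h <;> nlinarith
    dsimp only
    rw [hsq, Real.sqrt_sq hR.le]
    have hnum : (b * (R * Real.cos φ) - c * (R * Real.sin φ)) / R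
        = b * Real.cos φ - c * Real.sin φ := by
      field_simp
    rw [hnum]
    by_cases h : 0 < Real.cos φ
    · rw [if_pos h, if_pos (hcond.mpr h), smul_eq_mul]; ring
    · rw [if_neg h, if_neg (fun hh => h (hcond.mp hh)), smul_eq_mul, mul_zero, mul_zero]
  rw [setIntegral_congr_fun (measurableSet_Ioi.prod measurableSet_Ioo) key,
    Measure.volume_eq_prod, setIntegral_prod_mul (fun R : ℝ => R^2 * Real.exp (-R^2))
      (fun φ : ℝ => if 0 < Real.cos φ then
        Real.cos φ * fI (b * Real.cos φ - c * Real.sin φ) else 0) (Ioi 0) (Ioo (-π) π)]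
  congr 1
  have hsub2 : Ioo (-(π/2)) (π/2) ⊆ Ioo (-π) π :=
    Ioo_subset_Ioo (by linarith [pi_pos]) (by linarith [pi_pos])
  have hEq : EqOn (fun φ => if 0 < Real.cos φ then
      Real.cos φ * fI (b * Real.cos φ - c * Real.sin φ) else 0)
      ((Ioo (-(π/2)) (π/2)).indicator
        (fun φ => Real.cos φ * fI (b * Real.cos φ - c * Real.sin φ))) (Ioo (-π) π) := by
    rintro φ ⟨h1, h2⟩
    rw [Set.indicator_apply]
    dsimp only
    have hiff : (0 < Real.cos φ) ↔ φ ∈ Ioo (-(π/2)) (π/2) := by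
      constructor
      · intro hpos
        by_contra hmem
        simp only [mem_Ioo, not_and_or, not_lt] at hmem
        rcases hmem with h3 | h3
        · have : Real.cos (-φ) ≤ 0 :=
            Real.cos_nonpos_of_pi_div_two_le_of_le (by linarith) (by linarith)
          rw [Real.cos_neg] at this; linarith
        · have : Real.cos φ ≤ 0 :=
            Real.cos_nonpos_of_pi_div_two_le_of_le (by linarith) (by linarith)
          linarith
      · intro hmem
        exact Real.cos_pos_of_mem_Ioo hmem
    by_cases h : 0 < Real.cos φ
    · rw [if_pos h, if_pos (hiff.mp h)]
    · rw [if_neg h, if_neg (fun hh => h (hiff.mpr hh))]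
  rw [setIntegral_congr_fun measurableSet_Ioo hEq,
    setIntegral_indicator measurableSet_Ioo,
    inter_eq_self_of_subset_right hsub2]
  have hle2 : -(π/2) ≤ π/2 := by linarith [pi_pos]
  rw [← integral_Ioc_eq_integral_Ioo, ← intervalIntegral.integral_of_le hle2]
  have hderiv : ∀ x ∈ uIcc (-(π/2)) (π/2), HasDerivAt Real.sin (Real.cos x) x :=
    fun x _ => Real.hasDerivAt_sin x
  have hcont : ContinuousOn Real.cos (uIcc (-(π/2)) (π/2)) := Real.continuous_cos.continuousOn
  have hfc : Continuous (fun u : ℝ => fI (b * Real.sqrt (1 - u^2) - c * u)) :=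
    fI_cont.comp ((continuous_const.mul (Real.continuous_sqrt.comp
      (continuous_const.sub (continuous_pow 2)))).sub (continuous_const.mul continuous_id))
  have hsub := intervalIntegral.integral_comp_smul_deriv hderiv hcont hfc
  rw [Real.sin_neg, Real.sin_pi_div_two] at hsub
  rw [← hsub]
  apply intervalIntegral.integral_congr
  intro x hx
  rw [uIcc_of_le hle2] at hx
  have hcos : 0 ≤ Real.cos x := Real.cos_nonneg_of_mem_Icc hx
  have h1 : 1 - Real.sin x^2 = Real.cos x^2 := by
    have := Real.sin_sq_add_cos_sq x; linarith
  simp only [Function.comp_apply]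
  rw [h1, Real.sqrt_sq hcos, smul_eq_mul]

noncomputable def W2 : ℝ := ∫ t in Ioi (0:ℝ), t^2 * Real.exp (-t^2)

noncomputable def D2 (ζ : ℝ) : ℝ :=
  ∫ θ in Ioo (-π) π, ∫ η in (-1:ℝ)..1,
    fI (Real.sqrt (1-ζ^2) * Real.sin θ * Real.sqrt (1 - η^2) - ζ * η)

lemma claimA (ζ : ℝ) : G ζ = W2 * D2 ζ := by
  unfold W2 D2
  rw [G_eq_iterated, ← MeasureTheory.integral_const_mul]
  apply setIntegral_congr_fun measurableSet_Ioo
  intro θ _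
  dsimp only
  rw [← A4 (Real.sqrt (1-ζ^2) * Real.sin θ) ζ]
  show _ = ∫ z : ℝ, ∫ r in Ioi (0:ℝ), _
  apply MeasureTheory.integral_congr_ae
  filter_upwards with z
  apply setIntegral_congr_fun measurableSet_Ioi
  intro r _
  dsimp only
  rw [kfun]
  ring_nf

lemma W2_pos : 0 < W2 := by
  have hint : IntegrableOn (fun t : ℝ => t^2 * Real.exp (-t^2)) (Ioi 0) := by
    have h := integrable_rpow_mul_exp_neg_mul_sq (one_pos) (s := 2) (by norm_num)
    refine (h.integrableOn).congr_fun ?_ measurableSet_Ioi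
    intro t _
    dsimp only
    have h2 : t ^ (2:ℝ) = t ^ (2:ℕ) := by
      rw [← Real.rpow_natCast t 2]; norm_num
    rw [h2, neg_one_mul]
  rw [W2, setIntegral_pos_iff_support_of_nonneg_ae ?_ hint]
  · refine lt_of_lt_of_le ?_ (measure_mono (subset_inter ?_ Subset.rfl))
    · rw [Real.volume_Ioi]; exact ENNReal.zero_lt_top
    · intro t ht
      rw [mem_Ioi] at ht
      exact ne_of_gt (by positivity)
  · filter_upwards with t
    positivity

lemma D2_one : D2 1 = π^2 := by
  unfold D2
  have hs0 : Real.sqrt (1 - (1:ℝ)^2) = 0 := by norm_num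
  have hin : ∀ θ : ℝ, (∫ η in (-1:ℝ)..1,
      fI (Real.sqrt (1-(1:ℝ)^2) * Real.sin θ * Real.sqrt (1-η^2) - 1*η)) = π/2 := by
    intro θ
    have heq : ∀ η : ℝ, fI (Real.sqrt (1-(1:ℝ)^2) * Real.sin θ * Real.sqrt (1-η^2) - 1*η)
        = Real.sqrt (1-η^2) := by
      intro η
      rw [hs0, fI]
      norm_num
    simp_rw [heq]
    exact integral_sqrt_one_sub_sq
  simp_rw [hin]
  rw [setIntegral_const, Real.volume_real_Ioo, smul_eq_mul,
    (by ring : π - -π = 2*π), max_eq_left (by positivity : (0:ℝ) ≤ 2*π)]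
  ring

/-- The mean annual insolation distribution function, where `η` is the sine of the
latitude and `ζ` is the cosine of the obliquity. -/
noncomputable def s (η ζ : ℝ) : ℝ :=
  (2 / Real.pi ^ 2) * ∫ γ in (0:ℝ)..(2 * Real.pi),
    Real.sqrt (1 - (Real.sqrt (1 - η ^ 2) * Real.sqrt (1 - ζ ^ 2) * Real.sin γ - η * ζ) ^ 2)

theorem stmt_11 (ζ : ℝ) (hζ : ζ ∈ Set.Icc (-1:ℝ) 1) :
    ∫ η in (-1:ℝ)..1, s η ζ = 2 := by
  have hπ : (0:ℝ) < π := pi_pos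
  have hD : D2 ζ = π^2 := by
    have h3 := G_eq_G_one hζ
    rw [claimA ζ, claimA 1] at h3
    rw [mul_left_cancel₀ (ne_of_gt W2_pos) h3, D2_one]
  have hsval : ∀ η : ℝ, s η ζ = (2/π^2) * ∫ γ in (0:ℝ)..(2*π),
      fI (Real.sqrt (1-η^2) * Real.sqrt (1-ζ^2) * Real.sin γ - η*ζ) := fun η => rfl
  simp_rw [hsval]
  rw [intervalIntegral.integral_const_mul]
  have hDf : (∫ η in (-1:ℝ)..1, ∫ γ in (0:ℝ)..(2*π),
      fI (Real.sqrt (1-η^2) * Real.sqrt (1-ζ^2) * Real.sin γ - η*ζ)) = π^2 := by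
    rw [← hD]
    unfold D2
    have hle1 : (-1:ℝ) ≤ 1 := by norm_num
    have hleπ : -π ≤ π := by linarith
    haveI fin2 : IsFiniteMeasure (volume.restrict (Ioc (-π) π)) :=
      ⟨by rw [Measure.restrict_apply_univ]; exact measure_Ioc_lt_top⟩
    have hFmeas : Measurable (fun p : ℝ × ℝ =>
        fI (Real.sqrt (1-p.1^2) * Real.sqrt (1-ζ^2) * Real.sin p.2 - p.1*ζ)) := by
      exact fI_meas.comp ((((Real.continuous_sqrt.measurable.comp
        (measurable_const.sub (measurable_fst.pow_const 2))).mul measurable_const).mul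
        (Real.continuous_sin.measurable.comp measurable_snd)).sub
        (measurable_fst.mul measurable_const))
    have hFint : Integrable (Function.uncurry (fun η γ : ℝ =>
        fI (Real.sqrt (1-η^2) * Real.sqrt (1-ζ^2) * Real.sin γ - η*ζ)))
        ((volume.restrict (Ioc (-1:ℝ) 1)).prod (volume.restrict (Ioc (-π) π))) := by
      refine (integrable_const (1:ℝ)).mono' hFmeas.aestronglyMeasurable ?_
      filter_upwards with p
      rw [Real.norm_eq_abs]
      exact fI_abs_le_one _
    have hswap := MeasureTheory.integral_integral_swap hFint
    calc ∫ η in (-1:ℝ)..1, ∫ γ in (0:ℝ)..(2*π),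
          fI (Real.sqrt (1-η^2) * Real.sqrt (1-ζ^2) * Real.sin γ - η*ζ)
        = ∫ η in (-1:ℝ)..1, ∫ γ in (-π)..π,
          fI (Real.sqrt (1-η^2) * Real.sqrt (1-ζ^2) * Real.sin γ - η*ζ) := by
          apply intervalIntegral.integral_congr
          intro η _
          have hper : Function.Periodic (fun γ : ℝ =>
              fI (Real.sqrt (1-η^2) * Real.sqrt (1-ζ^2) * Real.sin γ - η*ζ)) (2*π) :=
            fun x => by simp [Real.sin_add_two_pi]
          have h := hper.intervalIntegral_add_eq (-π) 0
          rw [(by ring : -π + 2*π = π), zero_add] at h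
          exact h.symm
      _ = ∫ η in Ioc (-1:ℝ) 1, ∫ γ in Ioc (-π) π,
          fI (Real.sqrt (1-η^2) * Real.sqrt (1-ζ^2) * Real.sin γ - η*ζ) := by
          rw [intervalIntegral.integral_of_le hle1]
          apply setIntegral_congr_fun measurableSet_Ioc
          intro η _
          dsimp only
          rw [intervalIntegral.integral_of_le hleπ]
      _ = ∫ γ in Ioc (-π) π, ∫ η in Ioc (-1:ℝ) 1,
          fI (Real.sqrt (1-η^2) * Real.sqrt (1-ζ^2) * Real.sin γ - η*ζ) := hswap
      _ = ∫ θ in Ioo (-π) π, ∫ η in (-1:ℝ)..1,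
          fI (Real.sqrt (1-ζ^2) * Real.sin θ * Real.sqrt (1-η^2) - ζ*η) := by
          rw [integral_Ioc_eq_integral_Ioo]
          apply setIntegral_congr_fun measurableSet_Ioo
          intro θ _
          dsimp only
          rw [← intervalIntegral.integral_of_le hle1]
          apply intervalIntegral.integral_congr
          intro η _
          ring_nf
  rw [hDf]
  field_simp
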